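/- For β > 0, the Gaussian integral ∫_{−∞}^{∞} I_{0,0}(x)·e^{−βx²} dx = √(π/β) · ∑_{r=0}^∞ (1/(4β))^r / (r!·Γ(2r+1)²). -/

import Mathlib

open MeasureTheory Real Set

/-- Two-index Humbert-Bessel function with zero indices. -/
noncomputable def humbert00 (x : ℝ) : ℝ := ∑' r : ℕ, x ^ r / (r.factorial : ℝ) ^ 3

lemma central_factorial_le (n : ℕ) : (2 * n).factorial ≤ 4 ^ n * n.factorial ^ 2 := by
  have hch : (2 * n).choose n ≤ 4 ^ n := by
    calc (2 * n).choose n ≤ ∑ m ∈ Finset.range (2 * n + 1), (2 * n).choose m :=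
          Finset.single_le_sum (fun i _ => Nat.zero_le _) (by simp [Nat.lt_succ]; omega)
    _ = 2 ^ (2 * n) := Nat.sum_range_choose (2 * n)
    _ = 4 ^ n := by rw [pow_mul]; norm_num
  have h2 := Nat.choose_mul_factorial_mul_factorial (show n ≤ 2 * n by omega)
  have h3 : 2 * n - n = n := by omega
  rw [h3] at h2
  calc (2 * n).factorial = (2 * n).choose n * (n.factorial * n.factorial) := by
        rw [← h2]; ring
  _ ≤ 4 ^ n * n.factorial ^ 2 := by
        rw [sq]; exact Nat.mul_le_mul_right _ hch

lemma gamma_nat_half (m : ℕ) :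
    Real.Gamma (m + 1 / 2) =
      ((2 * m).factorial : ℝ) * Real.sqrt Real.pi / (4 ^ m * m.factorial) := by
  induction m with
  | zero =>
    simp only [Nat.cast_zero, zero_add, mul_zero, Nat.factorial_zero, Nat.cast_one, pow_zero]
    rw [show (1:ℝ)/2 = 2⁻¹ by norm_num] at *
    rw [show Real.Gamma 2⁻¹ = √π from by rw [← Real.Gamma_one_half_eq]; norm_num]
    norm_num
  | succ n ih =>
    have hne : ((n : ℝ) + 1 / 2) ≠ 0 := by positivity
    have h : ((n : ℝ) + 1) + 1 / 2 = ((n : ℝ) + 1 / 2) + 1 := by ring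
    have hfac : 0 < (n.factorial : ℝ) := by exact_mod_cast n.factorial_pos
    have h2 : ((2 * (n + 1)).factorial : ℝ)
        = (2 * n + 2) * ((2 * n + 1) * ((2 * n).factorial : ℝ)) := by
      have : 2 * (n + 1) = (2 * n + 1) + 1 := by ring
      rw [this, Nat.factorial_succ, Nat.factorial_succ]
      push_cast; ring
    have h3 : ((n + 1).factorial : ℝ) = (n + 1) * n.factorial := by
      rw [Nat.factorial_succ]; push_cast; ring
    push_cast
    rw [h, Real.Gamma_add_one hne, ih, h2, h3]
    field_simp
    ring

lemma int_pow_gauss {β : ℝ} (hβ : 0 < β) (n : ℕ) :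
    Integrable (fun x : ℝ => x ^ n * Real.exp (-β * x ^ 2)) := by
  have hn : (-1 : ℝ) < n := lt_of_lt_of_le neg_one_lt_zero (Nat.cast_nonneg n)
  simpa [Real.rpow_natCast] using integrable_rpow_mul_exp_neg_mul_sq hβ hn

lemma moment_even {β : ℝ} (hβ : 0 < β) (m : ℕ) :
    ∫ x : ℝ, x ^ (2 * m) * Real.exp (-β * x ^ 2)
      = (β ^ m * Real.sqrt β)⁻¹ *
          (((2 * m).factorial : ℝ) * Real.sqrt Real.pi / (4 ^ m * m.factorial)) := by
  have heven : Even (2 * m) := ⟨m, by ring⟩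
  have h1 : ∫ x : ℝ, x ^ (2 * m) * Real.exp (-β * x ^ 2)
      = 2 * ∫ x in Ioi (0 : ℝ), x ^ (2 * m) * Real.exp (-β * x ^ 2) := by
    have hpt : ∀ x : ℝ, x ^ (2 * m) * Real.exp (-β * x ^ 2)
        = |x| ^ (2 * m) * Real.exp (-β * |x| ^ 2) := by
      intro x; rw [Even.pow_abs heven, sq_abs]
    rw [integral_congr_ae (Filter.Eventually.of_forall hpt)]
    exact integral_comp_abs (f := fun t => t ^ (2 * m) * Real.exp (-β * t ^ 2))
  have hq : (-1 : ℝ) < ((2 * m : ℕ) : ℝ) :=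
    lt_of_lt_of_le neg_one_lt_zero (Nat.cast_nonneg _)
  have h2 : ∫ x in Ioi (0 : ℝ), x ^ (2 * m) * Real.exp (-β * x ^ 2)
      = β ^ (-(((2 * m : ℕ) : ℝ) + 1) / 2) * (1 / 2) *
          Real.Gamma ((((2 * m : ℕ) : ℝ) + 1) / 2) := by
    rw [← integral_rpow_mul_exp_neg_mul_rpow two_pos hq hβ]
    refine setIntegral_congr_fun measurableSet_Ioi fun x hx => ?_
    rw [Real.rpow_natCast x (2 * m)]
    norm_num [Real.rpow_natCast x 2]
  have hGamma : Real.Gamma ((((2 * m : ℕ) : ℝ) + 1) / 2) = Real.Gamma (m + 1 / 2) := by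
    congr 1; push_cast; ring
  have hrpow : β ^ (-(((2 * m : ℕ) : ℝ) + 1) / 2) = (β ^ m * Real.sqrt β)⁻¹ := by
    have : (-(((2 * m : ℕ) : ℝ) + 1) / 2) = (-(m : ℝ)) + (-(1 / 2)) := by push_cast; ring
    rw [this, Real.rpow_add hβ, Real.rpow_neg hβ.le, Real.rpow_neg hβ.le,
      Real.rpow_natCast, ← Real.sqrt_eq_rpow, mul_inv]
  rw [h1, h2, hGamma, hrpow, gamma_nat_half]
  ring

lemma moment_odd (β : ℝ) (m : ℕ) :
    ∫ x : ℝ, x ^ (2 * m + 1) * Real.exp (-β * x ^ 2) = 0 := by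
  have hodd : Odd (2 * m + 1) := ⟨m, by ring⟩
  have h := integral_neg_eq_self (fun x : ℝ => x ^ (2 * m + 1) * Real.exp (-β * x ^ 2))
    (volume : Measure ℝ)
  simp only [neg_sq, Odd.neg_pow hodd, neg_mul, integral_neg] at h ⊢
  linarith

lemma arith_bound {β : ℝ} (hβ : 0 < β) (r : ℕ) :
    ((r.factorial : ℝ) ^ 3)⁻¹ *
        ((β ^ r * Real.sqrt β)⁻¹ *
            (((2 * r).factorial : ℝ) * Real.sqrt Real.pi / (4 ^ r * r.factorial))
          + Real.sqrt (Real.pi / β))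
      ≤ Real.sqrt Real.pi * (Real.sqrt β)⁻¹ * ((β⁻¹ ^ r + 1) / r.factorial) := by
  have hsb : 0 < Real.sqrt β := Real.sqrt_pos.mpr hβ
  have hsπ : 0 < Real.sqrt Real.pi := Real.sqrt_pos.mpr Real.pi_pos
  have hf : (1 : ℝ) ≤ (r.factorial : ℝ) := by exact_mod_cast r.factorial_pos
  have hf0 : (0 : ℝ) < (r.factorial : ℝ) := by linarith
  have hkey : (((2 * r).factorial : ℝ)) ≤ 4 ^ r * (r.factorial : ℝ) ^ 2 := by
    exact_mod_cast central_factorial_le r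
  have hsd : Real.sqrt (Real.pi / β) = Real.sqrt Real.pi * (Real.sqrt β)⁻¹ := by
    rw [Real.sqrt_div Real.pi_pos.le, div_eq_mul_inv]
  rw [hsd]
  have hβr : (0:ℝ) < β ^ r := pow_pos hβ r
  have h4 : (0:ℝ) < (4:ℝ) ^ r := by positivity
  set c : ℝ := (r.factorial : ℝ) with hc
  have hc3 : (0:ℝ) < c ^ 3 := by positivity
  have key2 : ((2 * r).factorial : ℝ) / (4 ^ r * c ^ 4) ≤ 1 / c := by
    rw [div_le_div_iff₀ (by positivity) hf0]
    calc ((2 * r).factorial : ℝ) * c ≤ (4 ^ r * c ^ 2) * c :=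
          mul_le_mul_of_nonneg_right hkey hf0.le
    _ = 4 ^ r * c ^ 3 := by ring
    _ ≤ 4 ^ r * c ^ 4 := by
          have := pow_le_pow_right₀ hf (show 3 ≤ 4 by norm_num)
          exact mul_le_mul_of_nonneg_left this h4.le
    _ = 1 * (4 ^ r * c ^ 4) := by ring
  have hA : (c ^ 3)⁻¹ * ((β ^ r * Real.sqrt β)⁻¹ *
        (((2 * r).factorial : ℝ) * Real.sqrt Real.pi / (4 ^ r * c)))
      ≤ Real.sqrt Real.pi * (Real.sqrt β)⁻¹ * (β⁻¹ ^ r / c) := by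
    have e1 : (c ^ 3)⁻¹ * ((β ^ r * Real.sqrt β)⁻¹ *
          (((2 * r).factorial : ℝ) * Real.sqrt Real.pi / (4 ^ r * c)))
        = (Real.sqrt Real.pi * (Real.sqrt β)⁻¹ * (β ^ r)⁻¹) *
            (((2 * r).factorial : ℝ) / (4 ^ r * c ^ 4)) := by
      field_simp
    have e2 : Real.sqrt Real.pi * (Real.sqrt β)⁻¹ * (β⁻¹ ^ r / c)
        = (Real.sqrt Real.pi * (Real.sqrt β)⁻¹ * (β ^ r)⁻¹) * (1 / c) := by
      rw [inv_pow]; ring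
    rw [e1, e2]
    exact mul_le_mul_of_nonneg_left key2 (by positivity)
  have hB : (c ^ 3)⁻¹ * (Real.sqrt Real.pi * (Real.sqrt β)⁻¹)
      ≤ Real.sqrt Real.pi * (Real.sqrt β)⁻¹ * (1 / c) := by
    have hinv : (c ^ 3)⁻¹ ≤ 1 / c := by
      rw [one_div]
      gcongr
      nlinarith
    calc (c ^ 3)⁻¹ * (Real.sqrt Real.pi * (Real.sqrt β)⁻¹)
        ≤ (1 / c) * (Real.sqrt Real.pi * (Real.sqrt β)⁻¹) :=
          mul_le_mul_of_nonneg_right hinv (by positivity)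
    _ = Real.sqrt Real.pi * (Real.sqrt β)⁻¹ * (1 / c) := by ring
  calc (c ^ 3)⁻¹ * ((β ^ r * Real.sqrt β)⁻¹ *
        (((2 * r).factorial : ℝ) * Real.sqrt Real.pi / (4 ^ r * c))
        + Real.sqrt Real.pi * (Real.sqrt β)⁻¹)
      = (c ^ 3)⁻¹ * ((β ^ r * Real.sqrt β)⁻¹ *
          (((2 * r).factorial : ℝ) * Real.sqrt Real.pi / (4 ^ r * c)))
        + (c ^ 3)⁻¹ * (Real.sqrt Real.pi * (Real.sqrt β)⁻¹) := by ring
  _ ≤ Real.sqrt Real.pi * (Real.sqrt β)⁻¹ * (β⁻¹ ^ r / c)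
        + Real.sqrt Real.pi * (Real.sqrt β)⁻¹ * (1 / c) := add_le_add hA hB
  _ = Real.sqrt Real.pi * (Real.sqrt β)⁻¹ * ((β⁻¹ ^ r + 1) / c) := by ring

theorem humbert_gaussian_integral (β : ℝ) (hβ : 0 < β) :
    ∫ x : ℝ, humbert00 x * Real.exp (-β * x ^ 2) =
      Real.sqrt (Real.pi / β) *
        ∑' r : ℕ, (1 / (4 * β)) ^ r /
          ((r.factorial : ℝ) * Real.Gamma (2 * r + 1) ^ 2) := by
  have hsb : 0 < Real.sqrt β := Real.sqrt_pos.mpr hβ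
  have hsπ : 0 < Real.sqrt Real.pi := Real.sqrt_pos.mpr Real.pi_pos
  set F : ℕ → ℝ → ℝ := fun r x => x ^ r / (r.factorial : ℝ) ^ 3 * Real.exp (-β * x ^ 2) with hF
  have hrw : ∀ r : ℕ, F r = fun x : ℝ =>
      ((r.factorial : ℝ) ^ 3)⁻¹ * (x ^ r * Real.exp (-β * x ^ 2)) := by
    intro r; funext x; simp only [hF]; ring
  have hFint : ∀ r, Integrable (F r) := fun r => by
    rw [hrw r]; exact (int_pow_gauss hβ r).const_mul _
  have he2 : ∀ r : ℕ, (fun x : ℝ => (x ^ (2 * r) + 1) * Real.exp (-β * x ^ 2))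
      = fun x : ℝ => x ^ (2 * r) * Real.exp (-β * x ^ 2) + Real.exp (-β * x ^ 2) := by
    intro r; funext x; ring
  have hnormle : ∀ r : ℕ, (∫ x : ℝ, ‖F r x‖) ≤
      Real.sqrt Real.pi * (Real.sqrt β)⁻¹ * ((β⁻¹ ^ r + 1) / r.factorial) := by
    intro r
    have hadd : Integrable (fun x : ℝ => (x ^ (2 * r) + 1) * Real.exp (-β * x ^ 2)) := by
      rw [he2 r]
      exact (int_pow_gauss hβ (2 * r)).add (integrable_exp_neg_mul_sq hβ)
    have hint1 : Integrable (fun x : ℝ =>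
        ((r.factorial : ℝ) ^ 3)⁻¹ * ((x ^ (2 * r) + 1) * Real.exp (-β * x ^ 2))) :=
      hadd.const_mul _
    have hfr : (0:ℝ) < (r.factorial : ℝ) ^ 3 := by positivity
    have step1 : (∫ x : ℝ, ‖F r x‖) ≤
        ∫ x : ℝ, ((r.factorial : ℝ) ^ 3)⁻¹ * ((x ^ (2 * r) + 1) * Real.exp (-β * x ^ 2)) := by
      refine integral_mono (hFint r).norm hint1 fun x => ?_
      have h3 : |x| ^ (2 * r) = x ^ (2 * r) := Even.pow_abs ⟨r, by ring⟩ x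
      have habs : |x| ^ r ≤ x ^ (2 * r) + 1 := by
        rcases le_total (|x|) 1 with h | h
        · have h1 := pow_le_one₀ (abs_nonneg x) h (n := r)
          nlinarith [pow_nonneg (abs_nonneg x) (2 * r)]
        · have h2 : |x| ^ r ≤ |x| ^ (2 * r) := pow_le_pow_right₀ h (by omega)
          nlinarith
      simp only [hF, norm_mul, norm_div, Real.norm_eq_abs, abs_pow, Real.abs_exp,
        abs_of_pos hfr]
      have hre : |x| ^ r / (r.factorial : ℝ) ^ 3 * Real.exp (-β * x ^ 2)
          = ((r.factorial : ℝ) ^ 3)⁻¹ * (|x| ^ r * Real.exp (-β * x ^ 2)) := by ring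
      rw [hre]
      refine mul_le_mul_of_nonneg_left ?_ (by positivity)
      exact mul_le_mul_of_nonneg_right habs (Real.exp_pos _).le
    have step2 : ∫ x : ℝ, ((r.factorial : ℝ) ^ 3)⁻¹ * ((x ^ (2 * r) + 1) * Real.exp (-β * x ^ 2))
        = ((r.factorial : ℝ) ^ 3)⁻¹ *
          ((β ^ r * Real.sqrt β)⁻¹ *
            (((2 * r).factorial : ℝ) * Real.sqrt Real.pi / (4 ^ r * r.factorial))
            + Real.sqrt (Real.pi / β)) := by
      rw [integral_const_mul]
      congr 1
      rw [he2 r, integral_add (int_pow_gauss hβ (2 * r)) (integrable_exp_neg_mul_sq hβ),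
        moment_even hβ r, integral_gaussian]
    exact (step1.trans_eq step2).trans (arith_bound hβ r)
  have hsum : Summable (fun r : ℕ => ∫ x : ℝ, ‖F r x‖) := by
    refine Summable.of_nonneg_of_le (fun r => integral_nonneg fun x => norm_nonneg _)
      hnormle ?_
    have h1 : Summable (fun r : ℕ => (β⁻¹ ^ r + 1) / (r.factorial : ℝ)) := by
      have := (Real.summable_pow_div_factorial β⁻¹).add (Real.summable_pow_div_factorial 1)
      simpa [one_pow, add_div] using this
    exact h1.mul_left _
  have hswap := MeasureTheory.integral_tsum_of_summable_integral_norm hFint hsum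
  have hpt : ∀ x : ℝ, humbert00 x * Real.exp (-β * x ^ 2) = ∑' r : ℕ, F r x := by
    intro x
    rw [humbert00, ← tsum_mul_right]
  rw [integral_congr_ae (Filter.Eventually.of_forall hpt), ← hswap]
  have hinj : Function.Injective (fun m : ℕ => 2 * m) := fun a b h => by dsimp only at h; omega
  have hsupp : Function.support (fun r : ℕ => ∫ x : ℝ, F r x)
      ⊆ Set.range (fun m : ℕ => 2 * m) := by
    intro r hr
    by_contra hmem
    apply hr
    obtain ⟨m, rfl⟩ : ∃ m, r = 2 * m + 1 := by
      rcases Nat.even_or_odd r with ⟨k, hk⟩ | ⟨k, hk⟩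
      · exact absurd ⟨k, by dsimp only; omega⟩ hmem
      · exact ⟨k, hk⟩
    show (∫ x : ℝ, F (2 * m + 1) x) = 0
    rw [hrw (2 * m + 1)]
    rw [integral_const_mul, moment_odd β m, mul_zero]
  rw [← hinj.tsum_eq hsupp]
  have hterm : ∀ m : ℕ, (∫ x : ℝ, F (2 * m) x)
      = Real.sqrt (Real.pi / β) *
          ((1 / (4 * β)) ^ m / ((m.factorial : ℝ) * Real.Gamma (2 * (m : ℝ) + 1) ^ 2)) := by
    intro m
    rw [hrw (2 * m), integral_const_mul, moment_even hβ m]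
    have hg : Real.Gamma (2 * (m : ℝ) + 1) = ((2 * m).factorial : ℝ) := by
      rw [show 2 * (m : ℝ) + 1 = ((2 * m : ℕ) : ℝ) + 1 by push_cast; ring,
        Real.Gamma_nat_eq_factorial]
    rw [hg]
    have h2f : (0:ℝ) < ((2 * m).factorial : ℝ) := by exact_mod_cast (2 * m).factorial_pos
    have hmf : (0:ℝ) < (m.factorial : ℝ) := by exact_mod_cast m.factorial_pos
    have hβm : (0:ℝ) < β ^ m := pow_pos hβ m
    have h4m : (0:ℝ) < (4:ℝ) ^ m := by positivity
    rw [Real.sqrt_div Real.pi_pos.le, div_pow, mul_pow, one_pow]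
    field_simp
  calc ∑' m : ℕ, ∫ x : ℝ, F (2 * m) x
      = ∑' m : ℕ, Real.sqrt (Real.pi / β) *
          ((1 / (4 * β)) ^ m / ((m.factorial : ℝ) * Real.Gamma (2 * (m : ℝ) + 1) ^ 2)) :=
        tsum_congr hterm
  _ = Real.sqrt (Real.pi / β) *
        ∑' r : ℕ, (1 / (4 * β)) ^ r /
          ((r.factorial : ℝ) * Real.Gamma (2 * (r : ℝ) + 1) ^ 2) := tsum_mul_left
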